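/- Let q ∈ ℂ be nonzero and not a root of unity, let m be a positive integer, and let u, v be nonzero complex numbers such that u^{2c}·v^{2d} ≠ 1 for every (c,d) ∈ Γ. Then χ_m(u⁻¹, u³v) = χ_m(u,v) and χ_m(uv, v⁻¹) = χ_m(u,v) (all three quantities being well-defined). -/

import Mathlib

/-!
Invariance of the central character values `χ_λ(τ^m)` of `ℂ_q[G₂]` under the
shifted action of the Weyl group of `G₂`, expressed in the torus coordinates
`u = q^{(λ+ρ,α)}`, `v = q^{(λ+ρ,β)}`.
-/

noncomputable section

namespace G2Char

/-- The `G₂` inner product on `ℤ²` in the basis of simple roots `(α, β)`. -/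
def inner (c d : ℤ × ℤ) : ℤ := 2 * c.1 * d.1 - 3 * (c.1 * d.2 + c.2 * d.1) + 6 * c.2 * d.2

/-- The positive roots of `G₂`. -/
def Γ : List (ℤ × ℤ) := [(1, 0), (0, 1), (1, 1), (2, 1), (3, 1), (3, 2)]

/-- The weights of the 7-dimensional representation of `G₂`. -/
def N : List (ℤ × ℤ) := [(2, 1), (1, 1), (1, 0), (0, 0), (-1, 0), (-1, -1), (-2, -1)]

/-- The central character value `χ_m(u,v)`, equal (up to the constant `q^{8m}`) to
`χ_λ(τ^m)` where `u = q^{(λ+ρ,α)}`, `v = q^{(λ+ρ,β)}`. -/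
def χ (q u v : ℂ) (m : ℕ) : ℂ :=
  (N.map fun ν =>
    (q ^ inner ν ν * u ^ (2 * ν.1) * v ^ (2 * ν.2)) ^ m *
      (Γ.map fun γ =>
        (q ^ inner ν γ * u ^ γ.1 * v ^ γ.2 - q ^ (-inner ν γ) * u ^ (-γ.1) * v ^ (-γ.2)) /
          (u ^ γ.1 * v ^ γ.2 - u ^ (-γ.1) * v ^ (-γ.2))).prod).sum

/-- The basic one-root factor appearing in `χ`. -/
def g (q x : ℂ) (a : ℤ) : ℂ := (q ^ a * x - q ^ (-a) * x⁻¹) / (x - x⁻¹)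

lemma g_inv' (q x : ℂ) (a : ℤ) : g q x⁻¹ a = g q x (-a) := by
  unfold g; rw [inv_inv, neg_neg, ← neg_div_neg_eq, neg_sub, neg_sub]

/-- One summand of `χ`. -/
def term (q u v : ℂ) (m : ℕ) (ν : ℤ × ℤ) : ℂ :=
  (q ^ inner ν ν * u ^ (2 * ν.1) * v ^ (2 * ν.2)) ^ m *
      (Γ.map fun γ =>
        (q ^ inner ν γ * u ^ γ.1 * v ^ γ.2 - q ^ (-inner ν γ) * u ^ (-γ.1) * v ^ (-γ.2)) /
          (u ^ γ.1 * v ^ γ.2 - u ^ (-γ.1) * v ^ (-γ.2))).prod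

lemma chi_eq (q u v : ℂ) (m : ℕ) : χ q u v m = (N.map (term q u v m)).sum := rfl

lemma term_g (q u v : ℂ) (m : ℕ) (ν : ℤ × ℤ) :
    term q u v m ν =
      (q ^ inner ν ν * u ^ (2 * ν.1) * v ^ (2 * ν.2)) ^ m *
        (g q u (inner ν (1, 0)) * g q v (inner ν (0, 1)) * g q (u * v) (inner ν (1, 1)) *
          g q (u ^ 2 * v) (inner ν (2, 1)) * g q (u ^ 3 * v) (inner ν (3, 1)) *
          g q (u ^ 3 * v ^ 2) (inner ν (3, 2))) := by
  simp only [term, Γ, g, List.map_cons, List.map_nil, List.prod_cons, List.prod_nil,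
    mul_inv, zpow_one, zpow_zero, zpow_neg, zpow_ofNat, mul_one, one_mul, inv_one, neg_zero]
  ring

lemma term_a (q u v : ℂ) (m : ℕ) (hu : u ≠ 0) (hv : v ≠ 0) (ν : ℤ × ℤ) :
    term q u⁻¹ (u ^ 3 * v) m ν = term q u v m (3 * ν.2 - ν.1, ν.2) := by
  rw [term_g, term_g]
  rw [show q ^ inner ν ν * (u⁻¹) ^ (2 * ν.1) * (u ^ 3 * v) ^ (2 * ν.2)
        = q ^ inner (3 * ν.2 - ν.1, ν.2) (3 * ν.2 - ν.1, ν.2) *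
            u ^ (2 * (3 * ν.2 - ν.1, ν.2).1) * v ^ (2 * (3 * ν.2 - ν.1, ν.2).2) by
    rw [show inner (3 * ν.2 - ν.1, ν.2) (3 * ν.2 - ν.1, ν.2) = inner ν ν by simp [inner]; ring,
      mul_zpow, inv_zpow, ← zpow_neg, ← zpow_natCast u 3, ← zpow_mul,
      show (2 * (3 * ν.2 - ν.1, ν.2).1 : ℤ) = -(2 * ν.1) + (3:ℕ) * (2 * ν.2) by push_cast; ring,
      zpow_add₀ hu]
    ring]
  rw [g_inv' q u (inner ν (1, 0)),
    show -inner ν (1, 0) = inner (3 * ν.2 - ν.1, ν.2) (1, 0) by simp [inner]; ring,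
    show inner ν (0, 1) = inner (3 * ν.2 - ν.1, ν.2) (3, 1) by simp [inner]; ring,
    show inner ν (1, 1) = inner (3 * ν.2 - ν.1, ν.2) (2, 1) by simp [inner]; ring,
    show inner ν (2, 1) = inner (3 * ν.2 - ν.1, ν.2) (1, 1) by simp [inner]; ring,
    show inner ν (3, 1) = inner (3 * ν.2 - ν.1, ν.2) (0, 1) by simp [inner]; ring,
    show inner ν (3, 2) = inner (3 * ν.2 - ν.1, ν.2) (3, 2) by simp [inner]; ring,
    show (u⁻¹ * (u ^ 3 * v) : ℂ) = u ^ 2 * v by field_simp,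
    show ((u⁻¹) ^ 2 * (u ^ 3 * v) : ℂ) = u * v by rw [inv_pow]; field_simp,
    show ((u⁻¹) ^ 3 * (u ^ 3 * v) : ℂ) = v by rw [inv_pow]; field_simp,
    show ((u⁻¹) ^ 3 * (u ^ 3 * v) ^ 2 : ℂ) = u ^ 3 * v ^ 2 by rw [inv_pow]; field_simp]
  ring

lemma term_b (q u v : ℂ) (m : ℕ) (hu : u ≠ 0) (hv : v ≠ 0) (ν : ℤ × ℤ) :
    term q (u * v) v⁻¹ m ν = term q u v m (ν.1, ν.1 - ν.2) := by
  rw [term_g, term_g]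
  rw [show q ^ inner ν ν * (u * v) ^ (2 * ν.1) * (v⁻¹) ^ (2 * ν.2)
        = q ^ inner (ν.1, ν.1 - ν.2) (ν.1, ν.1 - ν.2) *
            u ^ (2 * (ν.1, ν.1 - ν.2).1) * v ^ (2 * (ν.1, ν.1 - ν.2).2) by
    rw [show inner (ν.1, ν.1 - ν.2) (ν.1, ν.1 - ν.2) = inner ν ν by simp [inner]; ring,
      mul_zpow, inv_zpow, ← zpow_neg,
      show (2 * (ν.1, ν.1 - ν.2).2 : ℤ) = 2 * ν.1 + -(2 * ν.2) by simp; ring,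
      zpow_add₀ hv]
    ring]
  rw [g_inv' q v (inner ν (0, 1)),
    show -inner ν (0, 1) = inner (ν.1, ν.1 - ν.2) (0, 1) by simp [inner]; ring,
    show inner ν (1, 0) = inner (ν.1, ν.1 - ν.2) (1, 1) by simp [inner]; ring,
    show inner ν (1, 1) = inner (ν.1, ν.1 - ν.2) (1, 0) by simp [inner]; ring,
    show inner ν (2, 1) = inner (ν.1, ν.1 - ν.2) (2, 1) by simp [inner]; ring,
    show inner ν (3, 1) = inner (ν.1, ν.1 - ν.2) (3, 2) by simp [inner]; ring,
    show inner ν (3, 2) = inner (ν.1, ν.1 - ν.2) (3, 1) by simp [inner]; ring,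
    show (u * v * v⁻¹ : ℂ) = u by field_simp,
    show ((u * v) ^ 2 * v⁻¹ : ℂ) = u ^ 2 * v by field_simp,
    show ((u * v) ^ 3 * v⁻¹ : ℂ) = u ^ 3 * v ^ 2 by field_simp,
    show ((u * v) ^ 3 * (v⁻¹) ^ 2 : ℂ) = u ^ 3 * v by rw [inv_pow]; field_simp]
  ring

theorem chi_weyl_invariant (q : ℂ) (hq : q ≠ 0) (hroot : ∀ n : ℕ, 0 < n → q ^ n ≠ 1)
    (m : ℕ) (hm : 0 < m) (u v : ℂ) (hu : u ≠ 0) (hv : v ≠ 0)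
    (hreg : ∀ γ ∈ Γ, u ^ (2 * γ.1) * v ^ (2 * γ.2) ≠ 1) :
    χ q u⁻¹ (u ^ 3 * v) m = χ q u v m ∧ χ q (u * v) v⁻¹ m = χ q u v m := by
  constructor
  · rw [chi_eq, chi_eq]
    simp only [N, List.map_cons, List.map_nil, List.sum_cons, List.sum_nil]
    simp only [term_a q u v m hu hv]
    norm_num
    ring
  · rw [chi_eq, chi_eq]
    simp only [N, List.map_cons, List.map_nil, List.sum_cons, List.sum_nil]
    simp only [term_b q u v m hu hv]
    norm_num
    ring

end G2Char
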